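/- Let A = Mₙ(ℂ) be the C*-algebra of n × n complex matrices. Then the frame O(Σ) of open subsets of Σ, ordered by inclusion, is order-isomorphic to the set of functions S : 𝒞(A) → P(A) such that S(C) ∈ P(C) for every C ∈ 𝒞(A) and S(C) ≤ S(D) whenever C ⊆ D, equipped with the pointwise partial order (S ≤ T iff S(C) ≤ T(C) for all C ∈ 𝒞(A)). -/

import Mathlib

open scoped Matrix.Norms.L2Operator

open WeakDual WeakDual.CharacterSpace

variable (A : Type*) [NormedRing A] [StarRing A] [CStarRing A] [NormedAlgebra ℂ A]
  [StarModule ℂ A] [CompleteSpace A]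

/-- `𝒞(A)`: the poset of commutative unital C*-subalgebras of `A`, i.e. closed, ⋆-closed
commutative subalgebras containing the unit, ordered by inclusion. -/
abbrev CommCStarSubalg :=
  {C : StarSubalgebra ℂ A // IsClosed (C : Set A) ∧ ∀ x ∈ C, ∀ y ∈ C, x * y = y * x}

/-- `Σ = ∐_{C ∈ 𝒞(A)} Σ(C)`: the disjoint union of the Gelfand spectra (character spaces,
with the relative weak-* topology) of the commutative unital C*-subalgebras of `A`. -/
abbrev GelfandSpec := (C : CommCStarSubalg A) × characterSpace ℂ C.1

variable {A}

/-- `RestrictsTo h ψ φ` says that `ψ ∈ Σ(D)` restricts to `φ ∈ Σ(C)` along `C ⊆ D`,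
i.e. `ψ|_C = φ`. -/
def RestrictsTo {C D : CommCStarSubalg A} (h : C ≤ D) (ψ : characterSpace ℂ D.1)
    (φ : characterSpace ℂ C.1) : Prop :=
  ∀ a : C.1, ψ ⟨a.1, h a.2⟩ = φ a

variable (A)

/-- Conditions (1) and (2) on a subset `𝒰 ⊆ Σ`:
(1) each `𝒰_C = 𝒰 ∩ Σ(C)` is open in `Σ(C)`, and
(2) if `C ⊆ D`, `λ ∈ 𝒰_C` and `λ' ∈ Σ(D)` restricts to `λ`, then `λ' ∈ 𝒰_D`. -/
def IsGoodOpen (U : Set (GelfandSpec A)) : Prop :=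
  (∀ C : CommCStarSubalg A,
    IsOpen {φ : characterSpace ℂ C.1 | (⟨C, φ⟩ : GelfandSpec A) ∈ U}) ∧
  (∀ (C D : CommCStarSubalg A) (h : C ≤ D) (φ : characterSpace ℂ C.1)
    (ψ : characterSpace ℂ D.1), RestrictsTo h ψ φ →
      (⟨C, φ⟩ : GelfandSpec A) ∈ U → (⟨D, ψ⟩ : GelfandSpec A) ∈ U)

/-- The topology on `Σ` whose open sets are those satisfying conditions (1) and (2). -/
instance (priority := 2000) gelfandSpecTopology : TopologicalSpace (GelfandSpec A) where
  IsOpen := IsGoodOpen A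
  isOpen_univ := ⟨fun _ => isOpen_univ, fun _ _ _ _ _ _ _ => trivial⟩
  isOpen_inter := fun U V hU hV =>
    ⟨fun C => (hU.1 C).inter (hV.1 C),
     fun C D h φ ψ hr hm => ⟨hU.2 C D h φ ψ hr hm.1, hV.2 C D h φ ψ hr hm.2⟩⟩
  isOpen_sUnion := fun S hS =>
    ⟨fun C => by
      have : {φ : characterSpace ℂ C.1 | (⟨C, φ⟩ : GelfandSpec A) ∈ ⋃₀ S}
          = ⋃ U ∈ S, {φ : characterSpace ℂ C.1 | (⟨C, φ⟩ : GelfandSpec A) ∈ U} := by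
        ext φ; simp
      rw [this]
      exact isOpen_biUnion fun U hU => (hS U hU).1 C,
     fun C D h φ ψ hr hm => by
      obtain ⟨U, hU, hm⟩ := hm
      exact ⟨U, hU, (hS U hU).2 C D h φ ψ hr hm⟩⟩

/-- The Alexandrov topology on `𝒞(A)`: open sets are exactly the upward closed sets. -/
instance (priority := 2000) commCStarSubalgTopology :
    TopologicalSpace (CommCStarSubalg A) where
  IsOpen U := ∀ ⦃C D : CommCStarSubalg A⦄, C ≤ D → C ∈ U → D ∈ U
  isOpen_univ := fun _ _ _ _ => trivial
  isOpen_inter := fun U V hU hV C D h hm => ⟨hU h hm.1, hV h hm.2⟩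
  isOpen_sUnion := fun S hS C D h hm => by
    obtain ⟨U, hU, hm⟩ := hm
    exact ⟨U, hU, hS U hU h hm⟩


section Helpers

variable {A : Type*} [NormedRing A] [StarRing A] [CStarRing A] [NormedAlgebra ℂ A]
  [StarModule ℂ A] [CompleteSpace A]

set_option linter.unusedSectionVars false

noncomputable instance (C : CommCStarSubalg A) : CommCStarAlgebra C.1 where
  toCompleteSpace := C.2.1.completeSpace_coe
  norm_mul_self_le x := CStarRing.norm_star_mul_self (x := (x : A)) |>.symm.le
  mul_comm x y := Subtype.ext (C.2.2 x.1 x.2 y.1 y.2)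

instance (C : CommCStarSubalg A) [FiniteDimensional ℂ A] : FiniteDimensional ℂ C.1 :=
  FiniteDimensional.of_injective (C.1.subtype.toLinearMap) Subtype.val_injective

instance (C : CommCStarSubalg A) [FiniteDimensional ℂ A] : Finite (characterSpace ℂ C.1) := by
  have : Finite (↥C.1 →ₐ[ℂ] ℂ) := by
    have h1 := linearIndependent_monoidHom (↥C.1) ℂ
    have h3 : LinearIndependent ℂ (fun f : ↥C.1 →ₐ[ℂ] ℂ => (⇑f : ↥C.1 → ℂ)) :=
      h1.comp (fun f : ↥C.1 →ₐ[ℂ] ℂ => (f : ↥C.1 →* ℂ))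
        (fun f g h => AlgHom.ext fun b => DFunLike.congr_fun h b)
    let coefn : (↥C.1 →ₗ[ℂ] ℂ) →ₗ[ℂ] (↥C.1 → ℂ) :=
      { toFun := fun f => ⇑f, map_add' := fun f g => rfl, map_smul' := fun c f => rfl }
    have h4 : LinearIndependent ℂ (fun f : ↥C.1 →ₐ[ℂ] ℂ => f.toLinearMap) :=
      LinearIndependent.of_comp coefn h3
    exact h4.finite
  exact Finite.of_equiv _ equivAlgHom.symm

instance (C : CommCStarSubalg A) [FiniteDimensional ℂ A] :
    DiscreteTopology (characterSpace ℂ C.1) := Finite.instDiscreteTopology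

variable [FiniteDimensional ℂ A]

open Classical in
noncomputable def projOfSet (C : CommCStarSubalg A) (V : Set (characterSpace ℂ C.1)) : C.1 :=
  (gelfandStarTransform C.1).symm
    ⟨fun φ => if φ ∈ V then 1 else 0, continuous_of_discreteTopology⟩

open Classical in
lemma projOfSet_apply (C : CommCStarSubalg A) (V : Set (characterSpace ℂ C.1))
    (φ : characterSpace ℂ C.1) : φ (projOfSet C V) = if φ ∈ V then 1 else 0 := by
  have h := (gelfandStarTransform C.1).apply_symm_apply
    (⟨fun φ => if φ ∈ V then 1 else 0, continuous_of_discreteTopology⟩ : C(characterSpace ℂ C.1, ℂ))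
  have h2 := congrFun (congrArg DFunLike.coe h) φ
  simpa [projOfSet, gelfandStarTransform_apply_apply] using h2

lemma ext_char {C : CommCStarSubalg A} {x y : C.1}
    (h : ∀ φ : characterSpace ℂ C.1, φ x = φ y) : x = y :=
  (gelfandStarTransform C.1).injective (ContinuousMap.ext fun φ => by
    exact h φ)

lemma projOfSet_sq (C : CommCStarSubalg A) (V : Set (characterSpace ℂ C.1)) :
    projOfSet C V * projOfSet C V = projOfSet C V :=
  ext_char fun φ => by
    rw [map_mul, projOfSet_apply]
    split_ifs <;> simp

lemma projOfSet_star (C : CommCStarSubalg A) (V : Set (characterSpace ℂ C.1)) :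
    star (projOfSet C V) = projOfSet C V :=
  ext_char fun φ => by
    rw [map_star, projOfSet_apply]
    split_ifs <;> simp

lemma char_proj_eq_zero_or_one {C : CommCStarSubalg A} {x : C.1} (hx : x * x = x)
    (φ : characterSpace ℂ C.1) : φ x = 0 ∨ φ x = 1 := by
  have h : φ x * φ x = φ x := by rw [← map_mul, hx]
  by_cases h0 : φ x = 0
  · exact Or.inl h0
  · exact Or.inr (mul_left_cancel₀ h0 (h.trans (mul_one _).symm))

lemma projOfSet_eq_self {C : CommCStarSubalg A} {x : C.1} (hx : x * x = x) :
    projOfSet C {φ | φ x = 1} = x :=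
  ext_char fun φ => by
    rw [projOfSet_apply]
    rcases char_proj_eq_zero_or_one hx φ with h | h <;>
      simp [Set.mem_setOf_eq, h]

/-- Restriction of a character along an inclusion of subalgebras. -/
noncomputable def restrictChar {C D : CommCStarSubalg A} (h : C ≤ D)
    (ψ : characterSpace ℂ D.1) : characterSpace ℂ C.1 :=
  equivAlgHom.symm ((equivAlgHom ψ).comp (StarSubalgebra.inclusion h).toAlgHom)

lemma restrictChar_restrictsTo {C D : CommCStarSubalg A} (h : C ≤ D)
    (ψ : characterSpace ℂ D.1) : RestrictsTo h ψ (restrictChar h ψ) := fun a => by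
  have : restrictChar h ψ a
      = ((equivAlgHom ψ).comp (StarSubalgebra.inclusion h).toAlgHom) a := by
    rw [restrictChar]
    exact congrFun (equivAlgHom_symm_coe _) a
  rw [this]
  rfl

/-- The projection-valued function associated to a subset of `Σ`. -/
noncomputable def projFun (U : Set (GelfandSpec A)) (C : CommCStarSubalg A) : C.1 :=
  projOfSet C {φ | (⟨C, φ⟩ : GelfandSpec A) ∈ U}

open Classical in
lemma projFun_apply (U : Set (GelfandSpec A)) (C : CommCStarSubalg A)
    (φ : characterSpace ℂ C.1) :
    φ (projFun U C) = if (⟨C, φ⟩ : GelfandSpec A) ∈ U then 1 else 0 := by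
  rw [projFun, projOfSet_apply]; rfl

lemma projFun_apply_eq_one_iff (U : Set (GelfandSpec A)) (C : CommCStarSubalg A)
    (φ : characterSpace ℂ C.1) :
    φ (projFun U C) = 1 ↔ (⟨C, φ⟩ : GelfandSpec A) ∈ U := by
  rw [projFun_apply]
  split_ifs with h <;> simp [h]

lemma projFun_mono {U : Set (GelfandSpec A)} (hU : IsOpen U) {C D : CommCStarSubalg A}
    (h : C ≤ D) : (projFun U C : A) * (projFun U D : A) = (projFun U C : A) := by
  set x : D.1 := ⟨(projFun U C : A), h (projFun U C).2⟩ with hx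
  have key : x * projFun U D = x := by
    apply ext_char
    intro ψ
    have hres := restrictChar_restrictsTo h ψ (projFun U C)
    have hψx : ψ x = restrictChar h ψ (projFun U C) := hres
    rw [map_mul, hψx]
    by_cases hmem : (⟨C, restrictChar h ψ⟩ : GelfandSpec A) ∈ U
    · have hD : (⟨D, ψ⟩ : GelfandSpec A) ∈ U :=
        hU.2 C D h (restrictChar h ψ) ψ (restrictChar_restrictsTo h ψ) hmem
      rw [(projFun_apply_eq_one_iff U D ψ).2 hD, mul_one]
    · rw [projFun_apply, if_neg hmem, zero_mul]
  calc (projFun U C : A) * (projFun U D : A) = ((x * projFun U D : D.1) : A) := rfl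
    _ = ((x : D.1) : A) := by rw [key]

/-- The subset of `Σ` associated to a projection-valued function. -/
def specSet (S : (C : CommCStarSubalg A) → A) (hS : ∀ C, S C ∈ C.1) :
    Set (GelfandSpec A) :=
  {x | x.2 ⟨S x.1, hS x.1⟩ = 1}

lemma specSet_isOpen (S : (C : CommCStarSubalg A) → A) (hS : ∀ C, S C ∈ C.1)
    (hmono : ∀ C D, C ≤ D → S C * S D = S C) : IsOpen (specSet S hS) := by
  constructor
  · intro C
    exact isOpen_discrete _
  · intro C D h φ ψ hres hmem
    have hCD : (⟨S C, h (hS C)⟩ : D.1) * ⟨S D, hS D⟩ = ⟨S C, h (hS C)⟩ :=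
      Subtype.ext (hmono C D h)
    have h1 : ψ (⟨S C, h (hS C)⟩ : D.1) = 1 := by
      have := hres ⟨S C, hS C⟩
      rw [this]; exact hmem
    have h2 : ψ ((⟨S C, h (hS C)⟩ : D.1) * ⟨S D, hS D⟩) = 1 := by rw [hCD]; exact h1
    rw [map_mul, h1, one_mul] at h2
    exact h2

end Helpers

/-- For `A = Mₙ(ℂ)` (with its C*-algebra structure given by the L2 operator norm), the
frame `O(Σ)` of open subsets of `Σ`, ordered by inclusion, is order-isomorphic to the set
of maps `S : 𝒞(A) → P(A)` with `S(C) ∈ P(C)` and `S(C) ≤ S(D)` for `C ⊆ D`, with the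
pointwise order of projections (`p ≤ q` iff `pq = p`). -/
theorem opens_gelfandSpec_matrix_orderIso (n : ℕ) :
    ∃ e : {U : Set (GelfandSpec (Matrix (Fin n) (Fin n) ℂ)) // IsOpen U} ≃
        {S : (C : CommCStarSubalg (Matrix (Fin n) (Fin n) ℂ)) →
            Matrix (Fin n) (Fin n) ℂ //
          (∀ C, S C ∈ C.1 ∧ S C * S C = S C ∧ star (S C) = S C) ∧
          (∀ C D, C ≤ D → S C * S D = S C)},
      ∀ U V, U.1 ⊆ V.1 ↔ ∀ C, (e U).1 C * (e V).1 C = (e U).1 C := by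
  classical
  refine ⟨⟨fun U => ⟨fun C => (projFun U.1 C : Matrix (Fin n) (Fin n) ℂ),
      ⟨fun C => ⟨(projFun U.1 C).2, ?_, ?_⟩, fun C D h => projFun_mono U.2 h⟩⟩,
    fun S => ⟨specSet S.1 (fun C => (S.2.1 C).1), specSet_isOpen _ _ S.2.2⟩,
    ?_, ?_⟩, ?_⟩
  · simpa [projFun] using congrArg Subtype.val (projOfSet_sq C _)
  · simpa [projFun] using congrArg Subtype.val (projOfSet_star C _)
  · -- left inverse
    intro U
    apply Subtype.ext
    ext x
    obtain ⟨C, φ⟩ := x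
    exact projFun_apply_eq_one_iff U.1 C φ
  · -- right inverse
    intro S
    apply Subtype.ext
    funext C
    have hx : (⟨S.1 C, (S.2.1 C).1⟩ : C.1) * ⟨S.1 C, (S.2.1 C).1⟩
        = ⟨S.1 C, (S.2.1 C).1⟩ := Subtype.ext (S.2.1 C).2.1
    exact congrArg Subtype.val (projOfSet_eq_self hx)
  · -- order condition
    intro U V
    constructor
    · intro hUV C
      have key : projFun U.1 C * projFun V.1 C = projFun U.1 C := by
        apply ext_char
        intro φ
        rw [map_mul, projFun_apply, projFun_apply]
        by_cases hmem : (⟨C, φ⟩ : GelfandSpec (Matrix (Fin n) (Fin n) ℂ)) ∈ U.1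
        · rw [if_pos hmem, if_pos (hUV hmem), one_mul]
        · rw [if_neg hmem, zero_mul]
      simpa using congrArg Subtype.val key
    · intro h x hxU
      obtain ⟨C, φ⟩ := x
      have h1 : φ (projFun U.1 C) = 1 := (projFun_apply_eq_one_iff U.1 C φ).2 hxU
      have hmul : projFun U.1 C * projFun V.1 C = projFun U.1 C := Subtype.ext (h C)
      have h2 : φ (projFun U.1 C) * φ (projFun V.1 C) = 1 := by
        rw [← map_mul, hmul, h1]
      rw [h1, one_mul] at h2
      exact (projFun_apply_eq_one_iff V.1 C φ).1 h2
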